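/- Let p ≥ 2 be real and let κ_{1,p}(z) = ((1 + z)²/2)^{1/p} · exp((1 − 1/p)(z − 1)/(z + 1)) with Taylor expansion κ_{1,p}(z) = Σ_{n≥0} cₙ⁰ zⁿ on 𝔻. Then |c₁⁰| = (2/e)^{1 − 1/p}, and Σ_{n≥2} |cₙ⁰|² < 1/2 < |c₁⁰|². -/

import Mathlib

open Complex Metric Set MeasureTheory Filter

noncomputable section

/-- The open unit disk in ℂ. -/
def unitDisk : Set ℂ := Metric.ball 0 1

/-- The `n`-th Taylor coefficient of `f` at the origin. -/
def coeff (f : ℂ → ℂ) (n : ℕ) : ℂ := iteratedDeriv n f 0 / (n.factorial : ℂ)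

/-- The extremal function `κ_{1,p}(z) = ((1+z)²/2)^{1/p} exp((1-1/p)(z-1)/(z+1))`
(principal branch of the power). -/
def kappaOneP (p : ℝ) : ℂ → ℂ := fun z =>
  ((1 + z) ^ 2 / 2) ^ ((1 : ℂ) / (p : ℂ)) *
    Complex.exp ((1 - 1 / (p : ℂ)) * ((z - 1) / (z + 1)))

namespace Stmt16Aux

lemma one_add_ne_zero {z : ℂ} (hz : ‖z‖ < 1) : (1 : ℂ) + z ≠ 0 := by
  intro h
  have : z = -1 := by linear_combination h
  rw [this] at hz
  simp at hz

lemma z_add_one_ne_zero {z : ℂ} (hz : ‖z‖ < 1) : z + 1 ≠ 0 := by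
  rw [add_comm]; exact one_add_ne_zero hz

lemma kslit {z : ℂ} (hz : ‖z‖ < 1) : ((1 + z) ^ 2 / 2 : ℂ) ∈ Complex.slitPlane := by
  have hre : 0 < (1 + z).re := by
    have h1 : |z.re| < 1 := lt_of_le_of_lt (Complex.abs_re_le_norm z) hz
    have h2 := (abs_lt.mp h1).1
    simp only [Complex.add_re, Complex.one_re]
    linarith
  rw [Complex.mem_slitPlane_iff]
  have hre2 : ((1 + z) ^ 2 / 2).re = ((1 + z).re ^ 2 - (1 + z).im ^ 2) / 2 := by
    simp [pow_two, Complex.div_re, Complex.mul_re, Complex.normSq]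
    try ring
  have him2 : ((1 + z) ^ 2 / 2).im = (1 + z).re * (1 + z).im := by
    simp [pow_two, Complex.div_im, Complex.mul_im, Complex.normSq]
    try ring
  rcases eq_or_ne (1 + z).im 0 with h | h
  · left; rw [hre2, h]; nlinarith [hre]
  · right; rw [him2]; exact mul_ne_zero (ne_of_gt hre) h

lemma kdiff (p : ℝ) : DifferentiableOn ℂ (kappaOneP p) (Metric.ball 0 1) := by
  intro z hz
  rw [Metric.mem_ball, dist_zero_right] at hz
  apply DifferentiableAt.differentiableWithinAt
  apply DifferentiableAt.mul
  · apply DifferentiableAt.cpow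
    · fun_prop
    · fun_prop
    · exact kslit hz
  · apply DifferentiableAt.cexp
    apply DifferentiableAt.const_mul
    exact DifferentiableAt.div (by fun_prop) (by fun_prop) (z_add_one_ne_zero hz)

lemma khasSum (p : ℝ) {z : ℂ} (hz : ‖z‖ < 1) :
    HasSum (fun n => coeff (kappaOneP p) n * z ^ n) (kappaOneP p z) := by
  have h := Complex.hasSum_taylorSeries_on_ball (kdiff p)
    (z := z) (by rwa [Metric.mem_ball, dist_zero_right])
  convert h using 2 with n
  · rfl
  have hn : (n.factorial : ℂ) ≠ 0 := Nat.cast_ne_zero.mpr n.factorial_ne_zero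
  simp only [coeff, smul_eq_mul, sub_zero]
  field_simp

lemma ksummable (p : ℝ) {r : ℝ} (hr0 : 0 ≤ r) (hr1 : r < 1) :
    Summable (fun n => ‖coeff (kappaOneP p) n‖ * r ^ n) := by
  obtain ⟨r', hrr', hr'1⟩ := exists_between hr1
  have hr'0 : 0 < r' := lt_of_le_of_lt hr0 hrr' |>.trans_le le_rfl
  have hs := (khasSum p (z := (r' : ℂ)) (by
    rwa [Complex.norm_real, Real.norm_eq_abs, abs_of_pos hr'0])).summable
  have ht : Filter.Tendsto (fun n => ‖coeff (kappaOneP p) n * (r' : ℂ) ^ n‖)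
      Filter.atTop (nhds 0) := by
    simpa using hs.tendsto_atTop_zero.norm
  obtain ⟨C, hC⟩ := ht.bddAbove_range
  have hCb : ∀ n, ‖coeff (kappaOneP p) n‖ * r' ^ n ≤ C := by
    intro n
    have := hC ⟨n, rfl⟩
    simpa [norm_mul, norm_pow, Complex.norm_real, Real.norm_eq_abs,
      abs_of_pos hr'0] using this
  have hgeo : Summable (fun n : ℕ => C * (r / r') ^ n) :=
    (summable_geometric_of_lt_one (by positivity) (by
      rw [div_lt_one hr'0]; exact hrr')).mul_left C
  apply Summable.of_nonneg_of_le (fun n => by positivity) _ hgeo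
  intro n
  have h1 : ‖coeff (kappaOneP p) n‖ * r ^ n
      = (‖coeff (kappaOneP p) n‖ * r' ^ n) * (r / r') ^ n := by
    rw [div_pow, mul_assoc, mul_comm ((r':ℝ) ^ n), div_mul_cancel₀]
    positivity
  rw [h1]
  exact mul_le_mul_of_nonneg_right (hCb n) (by positivity)

lemma inner_cont (r : ℝ) : Continuous fun θ : ℝ => (r : ℂ) * Complex.exp ((θ : ℂ) * I) := by
  fun_prop

lemma inner_mem {r : ℝ} (hr0 : 0 ≤ r) (hr1 : r < 1) (θ : ℝ) :
    ‖(r : ℂ) * Complex.exp ((θ : ℂ) * I)‖ < 1 := by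
  rw [norm_mul, Complex.norm_exp_ofReal_mul_I, mul_one, Complex.norm_real, Real.norm_eq_abs, _root_.abs_of_nonneg hr0]
  exact hr1

lemma Fcont (p : ℝ) {r : ℝ} (hr0 : 0 ≤ r) (hr1 : r < 1) :
    Continuous fun θ : ℝ => kappaOneP p ((r : ℂ) * Complex.exp ((θ : ℂ) * I)) := by
  apply (kdiff p).continuousOn.comp_continuous (inner_cont r)
  intro θ
  rw [Metric.mem_ball, dist_zero_right]
  exact inner_mem hr0 hr1 θ

lemma orth (n m : ℕ) :
    (∫ θ in Set.Ioc (0:ℝ) (2 * Real.pi), Complex.exp (((n : ℂ) - m) * θ * I))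
      = if n = m then ((2 * Real.pi : ℝ) : ℂ) else 0 := by
  have h2π : (0:ℝ) ≤ 2 * Real.pi := by positivity
  rw [← intervalIntegral.integral_of_le h2π]
  rcases eq_or_ne n m with h | h
  · subst h
    simp [Complex.exp_zero, sub_self]
  · have hk : ((n : ℂ) - m) ≠ 0 := sub_ne_zero.mpr (by exact_mod_cast h)
    have hcI : ((n : ℂ) - m) * I ≠ 0 := mul_ne_zero hk Complex.I_ne_zero
    have heq : (fun θ : ℝ => Complex.exp (((n : ℂ) - m) * θ * I))
        = fun θ : ℝ => Complex.exp ((((n : ℂ) - m) * I) * θ) := by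
      funext θ; rw [mul_right_comm]
    rw [heq, integral_exp_mul_complex hcI]
    have e1 : Complex.exp (((n : ℂ) - m) * I * (2 * (Real.pi : ℂ))) = 1 := by
      have h2 := Complex.exp_int_mul_two_pi_mul_I ((n : ℤ) - m)
      rw [← h2]; congr 1; push_cast; ring
    rw [if_neg h]
    simp [e1]

lemma exp_norm_one (x θ : ℝ) : ‖Complex.exp ((x : ℂ) * θ * I)‖ = 1 := by
  have : (x : ℂ) * θ * I = ((x * θ : ℝ) : ℂ) * I := by push_cast; ring
  rw [this, Complex.norm_exp_ofReal_mul_I]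

lemma exp_nat_sub_norm_one (n m : ℕ) (θ : ℝ) :
    ‖Complex.exp (((n : ℂ) - m) * θ * I)‖ = 1 := by
  have : ((n : ℂ) - m) = (((n : ℝ) - m : ℝ) : ℂ) := by push_cast; ring
  rw [this, exp_norm_one]

lemma kcoeffInt (p : ℝ) {r : ℝ} (hr0 : 0 < r) (hr1 : r < 1) (m : ℕ) :
    (∫ θ in Set.Ioc (0:ℝ) (2 * Real.pi),
        kappaOneP p ((r : ℂ) * Complex.exp ((θ : ℂ) * I)) * Complex.exp (-(m : ℂ) * θ * I))
      = ((2 * Real.pi : ℝ) : ℂ) * coeff (kappaOneP p) m * (r : ℂ) ^ m := by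
  set g : ℕ → ℝ → ℂ := fun n θ =>
    (coeff (kappaOneP p) n * (r : ℂ) ^ n) * Complex.exp (((n : ℂ) - m) * θ * I) with hg
  have key : ∀ θ : ℝ, HasSum (fun n => g n θ)
      (kappaOneP p ((r : ℂ) * Complex.exp ((θ : ℂ) * I)) * Complex.exp (-(m : ℂ) * θ * I)) := by
    intro θ
    have h := (khasSum p (inner_mem hr0.le hr1 θ)).mul_right (Complex.exp (-(m : ℂ) * θ * I))
    convert h using 2 with n
    · rfl
    rw [hg]
    simp only [mul_pow]
    rw [← Complex.exp_nat_mul,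
      show ((n : ℂ) - m) * θ * I = (n : ℂ) * ((θ:ℂ) * I) + (-(m : ℂ) * θ * I) by ring,
      Complex.exp_add]
    ring
  have hmeas : ∀ n, Integrable (g n) (volume.restrict (Set.Ioc (0:ℝ) (2 * Real.pi))) := by
    intro n
    apply Continuous.integrableOn_Ioc
    fun_prop
  have hnorm : ∀ n, (∫ θ in Set.Ioc (0:ℝ) (2 * Real.pi), ‖g n θ‖)
      = (‖coeff (kappaOneP p) n‖ * r ^ n) * (2 * Real.pi) := by
    intro n
    have : ∀ θ : ℝ, ‖g n θ‖ = ‖coeff (kappaOneP p) n‖ * r ^ n := by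
      intro θ
      rw [hg]
      simp only [norm_mul, norm_pow, Complex.norm_real, Real.norm_eq_abs,
        abs_of_pos hr0, exp_nat_sub_norm_one, mul_one]
    rw [setIntegral_congr_fun measurableSet_Ioc (fun θ _ => this θ)]
    rw [setIntegral_const, Real.volume_real_Ioc]
    rw [max_eq_left (by rw [sub_zero]; positivity)]
    simp [mul_comm]
  have hsum : Summable fun n => ∫ θ in Set.Ioc (0:ℝ) (2 * Real.pi), ‖g n θ‖ := by
    apply Summable.congr ((ksummable p hr0.le hr1).mul_right (2 * Real.pi))
    intro n
    exact (hnorm n).symm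
  have hswap := integral_tsum_of_summable_integral_norm hmeas hsum
  have hint : ∀ n, (∫ θ in Set.Ioc (0:ℝ) (2 * Real.pi), g n θ)
      = if n = m then (coeff (kappaOneP p) m * (r : ℂ) ^ m) * ((2 * Real.pi : ℝ) : ℂ) else 0 := by
    intro n
    rw [hg]
    simp only
    rw [MeasureTheory.integral_const_mul, orth n m]
    rcases eq_or_ne n m with h | h
    · subst h; rw [if_pos rfl, if_pos rfl]
    · rw [if_neg h, if_neg h, mul_zero]
  calc (∫ θ in Set.Ioc (0:ℝ) (2 * Real.pi),
        kappaOneP p ((r : ℂ) * Complex.exp ((θ : ℂ) * I)) * Complex.exp (-(m : ℂ) * θ * I))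
      = ∫ θ in Set.Ioc (0:ℝ) (2 * Real.pi), ∑' n, g n θ := by
        apply setIntegral_congr_fun measurableSet_Ioc
        intro θ _
        exact ((key θ).tsum_eq).symm
    _ = ∑' n, ∫ θ in Set.Ioc (0:ℝ) (2 * Real.pi), g n θ := hswap.symm
    _ = (coeff (kappaOneP p) m * (r : ℂ) ^ m) * ((2 * Real.pi : ℝ) : ℂ) := by
        rw [tsum_congr hint, tsum_eq_single m (fun b hb => if_neg hb)]
        rw [if_pos rfl]
    _ = ((2 * Real.pi : ℝ) : ℂ) * coeff (kappaOneP p) m * (r : ℂ) ^ m := by ring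

lemma conj_exp_nat (n : ℕ) (θ : ℝ) :
    (starRingEnd ℂ) (Complex.exp ((n : ℂ) * θ * I)) = Complex.exp (-(n : ℂ) * θ * I) := by
  rw [← Complex.exp_conj]
  congr 1
  simp [map_mul, Complex.conj_I]
  try ring

lemma bessel (p : ℝ) {r : ℝ} (hr0 : 0 < r) (hr1 : r < 1) (N : ℕ) :
    (∑ n ∈ Finset.range N, ‖coeff (kappaOneP p) n‖ ^ 2 * r ^ (2*n)) * (2 * Real.pi)
      ≤ ∫ θ in Set.Ioc (0:ℝ) (2 * Real.pi),
          ‖kappaOneP p ((r : ℂ) * Complex.exp ((θ : ℂ) * I))‖ ^ 2 := by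
  set b : ℕ → ℂ := fun n => coeff (kappaOneP p) n * (r:ℂ)^n with hb
  set S : ℝ → ℂ := fun θ => ∑ n ∈ Finset.range N, b n * Complex.exp ((n:ℂ) * θ * I) with hS
  set F : ℝ → ℂ := fun θ => kappaOneP p ((r : ℂ) * Complex.exp ((θ : ℂ) * I)) with hF
  have hFc : Continuous F := Fcont p hr0.le hr1
  have hSc : Continuous S := by
    apply continuous_finset_sum
    intro n _
    fun_prop
  have hconjS : ∀ θ : ℝ, (starRingEnd ℂ) (S θ)
      = ∑ n ∈ Finset.range N, (starRingEnd ℂ) (b n) * Complex.exp (-(n:ℂ) * θ * I) := by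
    intro θ
    rw [hS]
    simp only [map_sum, map_mul]
    exact Finset.sum_congr rfl (fun n _ => by rw [conj_exp_nat])
  have hFS : ∀ θ : ℝ, F θ * (starRingEnd ℂ) (S θ)
      = ∑ n ∈ Finset.range N, (starRingEnd ℂ) (b n) * (F θ * Complex.exp (-(n:ℂ) * θ * I)) := by
    intro θ
    rw [hconjS θ, Finset.mul_sum]
    exact Finset.sum_congr rfl (fun n _ => by ring)
  have h1 : (∫ θ in Set.Ioc (0:ℝ) (2 * Real.pi), F θ * (starRingEnd ℂ) (S θ))
      = (((∑ n ∈ Finset.range N, Complex.normSq (b n)) * (2 * Real.pi) : ℝ) : ℂ) := by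
    rw [integral_congr_ae (Filter.Eventually.of_forall hFS)]
    rw [integral_finset_sum _ (fun n _ => (Continuous.integrableOn_Ioc (by fun_prop)))]
    have hterm : ∀ n ∈ Finset.range N,
        (∫ θ in Set.Ioc (0:ℝ) (2 * Real.pi),
            (starRingEnd ℂ) (b n) * (F θ * Complex.exp (-(n:ℂ) * θ * I)))
          = ((Complex.normSq (b n) : ℝ) : ℂ) * ((2 * Real.pi : ℝ) : ℂ) := by
      intro n _
      rw [integral_const_mul, kcoeffInt p hr0 hr1 n]
      rw [show (starRingEnd ℂ) (b n) * (((2 * Real.pi : ℝ) : ℂ) * coeff (kappaOneP p) n * (r:ℂ)^n)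
          = (b n * (starRingEnd ℂ) (b n)) * ((2 * Real.pi : ℝ) : ℂ) by simp only [hb]; ring]
      rw [Complex.mul_conj]
    rw [Finset.sum_congr rfl hterm, ← Finset.sum_mul]
    push_cast
    ring
  have hSS : ∀ θ : ℝ, S θ * (starRingEnd ℂ) (S θ)
      = ∑ n ∈ Finset.range N, ∑ m ∈ Finset.range N,
          (b n * (starRingEnd ℂ) (b m)) * Complex.exp (((n:ℂ) - m) * θ * I) := by
    intro θ
    rw [hS, hconjS θ, Finset.sum_mul_sum]
    refine Finset.sum_congr rfl (fun n _ => Finset.sum_congr rfl (fun m _ => ?_))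
    rw [show ((n:ℂ) - m) * θ * I = (n:ℂ) * θ * I + (-(m:ℂ) * θ * I) by ring, Complex.exp_add]
    ring
  have h2 : (∫ θ in Set.Ioc (0:ℝ) (2 * Real.pi), S θ * (starRingEnd ℂ) (S θ))
      = (((∑ n ∈ Finset.range N, Complex.normSq (b n)) * (2 * Real.pi) : ℝ) : ℂ) := by
    rw [integral_congr_ae (Filter.Eventually.of_forall hSS)]
    rw [integral_finset_sum _ (fun n _ => (Continuous.integrableOn_Ioc (by
      apply continuous_finset_sum
      intro m _
      fun_prop)))]
    have hterm : ∀ n ∈ Finset.range N,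
        (∫ θ in Set.Ioc (0:ℝ) (2 * Real.pi), ∑ m ∈ Finset.range N,
            (b n * (starRingEnd ℂ) (b m)) * Complex.exp (((n:ℂ) - m) * θ * I))
          = ((Complex.normSq (b n) : ℝ) : ℂ) * ((2 * Real.pi : ℝ) : ℂ) := by
      intro n hn
      rw [integral_finset_sum _ (fun m _ => (Continuous.integrableOn_Ioc (by fun_prop)))]
      have hm : ∀ m ∈ Finset.range N,
          (∫ θ in Set.Ioc (0:ℝ) (2 * Real.pi),
              (b n * (starRingEnd ℂ) (b m)) * Complex.exp (((n:ℂ) - m) * θ * I))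
            = if n = m then (b n * (starRingEnd ℂ) (b m)) * ((2 * Real.pi : ℝ) : ℂ) else 0 := by
        intro m _
        rw [integral_const_mul, orth n m]
        rcases eq_or_ne n m with h | h
        · rw [if_pos h, if_pos h]
        · rw [if_neg h, if_neg h, mul_zero]
      rw [Finset.sum_congr rfl hm, Finset.sum_ite_eq (Finset.range N) n
        (fun m => (b n * (starRingEnd ℂ) (b m)) * ((2 * Real.pi : ℝ) : ℂ)), if_pos hn,
        Complex.mul_conj]
    rw [Finset.sum_congr rfl hterm, ← Finset.sum_mul]
    push_cast
    ring
  have hFSc : Continuous fun θ => F θ * (starRingEnd ℂ) (S θ) :=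
    hFc.mul (continuous_star.comp hSc)
  have hSSc : Continuous fun θ => S θ * (starRingEnd ℂ) (S θ) :=
    hSc.mul (continuous_star.comp hSc)
  have h3 : (0:ℝ) ≤ ∫ θ in Set.Ioc (0:ℝ) (2 * Real.pi), Complex.normSq (F θ - S θ) :=
    setIntegral_nonneg measurableSet_Ioc (fun θ _ => Complex.normSq_nonneg _)
  have hexp : ∀ θ : ℝ, Complex.normSq (F θ - S θ)
      = Complex.normSq (F θ) + Complex.normSq (S θ)
        - 2 * (F θ * (starRingEnd ℂ) (S θ)).re := by
    intro θ
    rw [Complex.normSq_sub]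
  have hintF : IntegrableOn (fun θ => Complex.normSq (F θ)) (Set.Ioc (0:ℝ) (2*Real.pi)) :=
    Continuous.integrableOn_Ioc (Complex.continuous_normSq.comp hFc)
  have hintS : IntegrableOn (fun θ => Complex.normSq (S θ)) (Set.Ioc (0:ℝ) (2*Real.pi)) :=
    Continuous.integrableOn_Ioc (Complex.continuous_normSq.comp hSc)
  have hintFS : IntegrableOn (fun θ => (F θ * (starRingEnd ℂ) (S θ)).re)
      (Set.Ioc (0:ℝ) (2*Real.pi)) :=
    Continuous.integrableOn_Ioc (Complex.continuous_re.comp hFSc)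
  have h4 : (∫ θ in Set.Ioc (0:ℝ) (2 * Real.pi), (F θ * (starRingEnd ℂ) (S θ)).re)
      = (∑ n ∈ Finset.range N, Complex.normSq (b n)) * (2 * Real.pi) := by
    have hre := integral_re (𝕜 := ℂ)
      (hFSc.integrableOn_Ioc (a := (0:ℝ)) (b := 2*Real.pi) (μ := volume))
    rw [h1] at hre
    simpa using hre
  have h5 : (∫ θ in Set.Ioc (0:ℝ) (2 * Real.pi), Complex.normSq (S θ))
      = (∑ n ∈ Finset.range N, Complex.normSq (b n)) * (2 * Real.pi) := by
    have hre0 : ∀ θ : ℝ, Complex.normSq (S θ) = (S θ * (starRingEnd ℂ) (S θ)).re := by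
      intro θ
      rw [Complex.mul_conj, Complex.ofReal_re]
    rw [setIntegral_congr_fun measurableSet_Ioc (fun θ _ => hre0 θ)]
    have hre := integral_re (𝕜 := ℂ)
      (hSSc.integrableOn_Ioc (a := (0:ℝ)) (b := 2*Real.pi) (μ := volume))
    rw [h2] at hre
    simpa using hre
  have h6 : (∫ θ in Set.Ioc (0:ℝ) (2 * Real.pi), Complex.normSq (F θ - S θ))
      = (∫ θ in Set.Ioc (0:ℝ) (2 * Real.pi), Complex.normSq (F θ))
        - (∑ n ∈ Finset.range N, Complex.normSq (b n)) * (2 * Real.pi) := by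
    rw [setIntegral_congr_fun measurableSet_Ioc (fun θ _ => hexp θ)]
    have hintFSsum : IntegrableOn (fun θ => Complex.normSq (F θ) + Complex.normSq (S θ))
        (Set.Ioc (0:ℝ) (2*Real.pi)) := hintF.add hintS
    have hint2 : IntegrableOn (fun θ => 2 * (F θ * (starRingEnd ℂ) (S θ)).re)
        (Set.Ioc (0:ℝ) (2*Real.pi)) := hintFS.const_mul 2
    rw [integral_sub hintFSsum hint2, integral_add hintF hintS,
      integral_const_mul, h4, h5]
    ring
  rw [h6] at h3
  have heq : ∀ n, Complex.normSq (b n)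
      = ‖coeff (kappaOneP p) n‖ ^ 2 * r ^ (2*n) := by
    intro n
    rw [hb, ← Complex.sq_norm, norm_mul, norm_pow, Complex.norm_real, Real.norm_eq_abs, _root_.abs_of_pos hr0]
    ring
  calc (∑ n ∈ Finset.range N, ‖coeff (kappaOneP p) n‖ ^ 2 * r ^ (2*n)) * (2 * Real.pi)
      = (∑ n ∈ Finset.range N, Complex.normSq (b n)) * (2 * Real.pi) := by
        rw [Finset.sum_congr rfl (fun n _ => (heq n))]
    _ ≤ ∫ θ in Set.Ioc (0:ℝ) (2 * Real.pi), Complex.normSq (F θ) := by linarith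
    _ = ∫ θ in Set.Ioc (0:ℝ) (2 * Real.pi), ‖F θ‖ ^ 2 :=
        setIntegral_congr_fun measurableSet_Ioc (fun θ _ => (Complex.sq_norm (F θ)).symm)

lemma circleNorm {r : ℝ} (hr0 : 0 ≤ r) :
    (∫ θ in Set.Ioc (0:ℝ) (2*Real.pi),
        ‖1 + (r:ℂ) * Complex.exp ((θ:ℂ)*I)‖ ^ 2)
      = 2 * Real.pi * (1 + r^2) := by
  have hpt : ∀ θ : ℝ, ‖1 + (r:ℂ) * Complex.exp ((θ:ℂ)*I)‖ ^ 2
      = 1 + 2*r*Real.cos θ + r^2 := by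
    intro θ
    rw [Complex.sq_norm, Complex.normSq_apply]
    simp only [Complex.add_re, Complex.add_im, Complex.one_re, Complex.one_im,
      Complex.mul_re, Complex.mul_im, Complex.ofReal_re, Complex.ofReal_im,
      Complex.exp_ofReal_mul_I_re, Complex.exp_ofReal_mul_I_im]
    nlinarith [Real.sin_sq_add_cos_sq θ]
  rw [setIntegral_congr_fun measurableSet_Ioc (fun θ _ => hpt θ),
    ← intervalIntegral.integral_of_le (by positivity : (0:ℝ) ≤ 2*Real.pi)]
  have hsplit : (∫ θ in (0:ℝ)..(2*Real.pi), (1 + 2*r*Real.cos θ + r^2))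
      = ∫ θ in (0:ℝ)..(2*Real.pi), ((1 + r^2) + (2*r) * Real.cos θ) := by
    apply intervalIntegral.integral_congr
    intro θ _
    ring
  rw [hsplit, intervalIntegral.integral_add (g := fun θ => (2*r) * Real.cos θ) intervalIntegrable_const
    ((continuous_const.mul Real.continuous_cos).intervalIntegrable _ _),
    intervalIntegral.integral_const_mul, integral_cos, intervalIntegral.integral_const]
  simp [Real.sin_two_pi]
  try ring

lemma ptbound (p : ℝ) (hp : 2 ≤ p) {z : ℂ} (hz : ‖z‖ < 1) :
    ‖kappaOneP p z‖ ^ 2 ≤ (1/p) * ‖1+z‖ ^ 2 + (1 - 2*(1/p)) := by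
  have hp0 : (0:ℝ) < p := by linarith
  have hq2 : 1/p ≤ 1/2 := by
    rw [div_le_div_iff₀ hp0 two_pos]
    linarith
  have hq0 : (0:ℝ) < 1/p := by positivity
  have hz1 : (1:ℂ) + z ≠ 0 := one_add_ne_zero hz
  have hw0 : ((1+z)^2/2 : ℂ) ≠ 0 := div_ne_zero (pow_ne_zero _ hz1) two_ne_zero
  have hcast : ((1:ℂ)/(p:ℂ)) = ((1/p : ℝ) : ℂ) := by push_cast; ring
  have h1 : ‖((1+z)^2/2 : ℂ) ^ ((1:ℂ)/(p:ℂ))‖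
      = (‖1+z‖^2/2) ^ (1/p) := by
    rw [Complex.norm_cpow_of_ne_zero hw0, hcast]
    simp only [Complex.ofReal_im, Complex.ofReal_re, mul_zero, Real.exp_zero, div_one]
    congr 1
    rw [norm_div, norm_pow]
    norm_num
  have hvre : (((z-1)/(z+1)) : ℂ).re ≤ 0 := by
    rw [Complex.div_re, ← add_div]
    apply div_nonpos_of_nonpos_of_nonneg _ (Complex.normSq_nonneg _)
    have hzn : Complex.normSq z < 1 := by
      rw [← Complex.sq_norm]
      nlinarith [norm_nonneg z]
    rw [Complex.normSq_apply] at hzn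
    simp only [Complex.sub_re, Complex.sub_im, Complex.add_re, Complex.add_im,
      Complex.one_re, Complex.one_im]
    nlinarith
  have h2 : ‖Complex.exp ((1 - 1/(p:ℂ)) * ((z-1)/(z+1)))‖ ≤ 1 := by
    rw [Complex.norm_exp, Real.exp_le_one_iff]
    have hc2 : ((1:ℂ) - 1/(p:ℂ)) = ((1 - 1/p : ℝ) : ℂ) := by push_cast; ring
    rw [hc2, Complex.re_ofReal_mul]
    have hmul := mul_le_mul_of_nonneg_left hvre (show (0:ℝ) ≤ 1 - 1/p by linarith)
    simpa using hmul
  set x : ℝ := ‖1+z‖^2/2 with hx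
  have hx0 : 0 ≤ x := by positivity
  have h3 : ‖kappaOneP p z‖ ≤ x ^ (1/p) := by
    simp only [kappaOneP]
    rw [norm_mul, h1]
    calc (x ^ (1/p)) * ‖Complex.exp ((1 - 1/(p:ℂ)) * ((z-1)/(z+1)))‖
        ≤ x ^ (1/p) * 1 := mul_le_mul_of_nonneg_left h2 (by positivity)
      _ = x ^ (1/p) := mul_one _
  have hxx : (x ^ (1/p)) ^ (2:ℕ) = x ^ (2*(1/p)) := by
    rw [← Real.rpow_natCast (x ^ (1/p)) 2, ← Real.rpow_mul hx0]
    norm_num [mul_comm]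
  have h4 : ‖kappaOneP p z‖ ^ 2 ≤ x ^ (2*(1/p)) := by
    have hpow := pow_le_pow_left₀ (norm_nonneg _) h3 2
    rwa [hxx] at hpow
  have h5 : x ^ (2*(1/p)) ≤ (2*(1/p)) * x + (1 - 2*(1/p)) := by
    have hgm := Real.geom_mean_le_arith_mean2_weighted (by positivity : (0:ℝ) ≤ 2*(1/p))
      (by linarith : (0:ℝ) ≤ 1 - 2*(1/p)) hx0 zero_le_one (by ring)
    simpa [Real.one_rpow] using hgm
  calc ‖kappaOneP p z‖ ^ 2 ≤ (2*(1/p)) * x + (1 - 2*(1/p)) := le_trans h4 h5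
    _ = (1/p) * ‖1+z‖ ^ 2 + (1 - 2*(1/p)) := by rw [hx]; ring

lemma partial_bound (p : ℝ) (hp : 2 ≤ p) {r : ℝ} (hr0 : 0 < r) (hr1 : r < 1) (N : ℕ) :
    (∑ n ∈ Finset.range N, ‖coeff (kappaOneP p) n‖ ^ 2 * r ^ (2*n))
      ≤ 1 - 1/p + (1/p) * r^2 := by
  have hπ : (0:ℝ) < 2*Real.pi := by positivity
  have hb := bessel p hr0 hr1 N
  have hmono : (∫ θ in Set.Ioc (0:ℝ) (2*Real.pi),
        ‖kappaOneP p ((r:ℂ)*Complex.exp ((θ:ℂ)*I))‖ ^ 2)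
      ≤ ∫ θ in Set.Ioc (0:ℝ) (2*Real.pi),
          ((1/p) * ‖1 + (r:ℂ)*Complex.exp ((θ:ℂ)*I)‖ ^ 2 + (1 - 2*(1/p))) := by
    apply setIntegral_mono_on
    · exact Continuous.integrableOn_Ioc
        ((continuous_norm.comp (Fcont p hr0.le hr1)).pow 2)
    · exact Continuous.integrableOn_Ioc
        ((continuous_const.mul ((continuous_norm.comp
          (continuous_const.add (inner_cont r))).pow 2)).add continuous_const)
    · exact measurableSet_Ioc
    · intro θ _
      exact ptbound p hp (inner_mem hr0.le hr1 θ)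
  have hRHS : (∫ θ in Set.Ioc (0:ℝ) (2*Real.pi),
        ((1/p) * ‖1 + (r:ℂ)*Complex.exp ((θ:ℂ)*I)‖ ^ 2 + (1 - 2*(1/p))))
      = 2*Real.pi * ((1/p)*(1+r^2) + (1 - 2*(1/p))) := by
    have hI1 : IntegrableOn (fun θ : ℝ =>
        (1/p) * ‖1 + (r:ℂ)*Complex.exp ((θ:ℂ)*I)‖ ^ 2)
        (Set.Ioc (0:ℝ) (2*Real.pi)) :=
      Continuous.integrableOn_Ioc (continuous_const.mul ((continuous_norm.comp
        (continuous_const.add (inner_cont r))).pow 2))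
    have hI2 : IntegrableOn (fun _ : ℝ => (1 - 2*(1/p)))
        (Set.Ioc (0:ℝ) (2*Real.pi)) := Continuous.integrableOn_Ioc continuous_const
    rw [integral_add hI1 hI2,
      integral_const_mul, circleNorm hr0.le, setIntegral_const, Real.volume_real_Ioc,
      max_eq_left (by rw [sub_zero]; positivity)]
    simp only [smul_eq_mul, sub_zero]
    ring
  have hfin : (∑ n ∈ Finset.range N,
      ‖coeff (kappaOneP p) n‖ ^ 2 * r ^ (2*n)) * (2 * Real.pi)
        ≤ 2*Real.pi * ((1/p)*(1+r^2) + (1 - 2*(1/p))) := le_trans hb (hmono.trans_eq hRHS)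
  have hdiv : (∑ n ∈ Finset.range N, ‖coeff (kappaOneP p) n‖ ^ 2 * r ^ (2*n))
      ≤ (1/p)*(1+r^2) + (1 - 2*(1/p)) := by
    rw [mul_comm] at hfin
    exact le_of_mul_le_mul_left hfin hπ
  calc (∑ n ∈ Finset.range N, ‖coeff (kappaOneP p) n‖ ^ 2 * r ^ (2*n))
      ≤ (1/p)*(1+r^2) + (1 - 2*(1/p)) := hdiv
    _ = 1 - 1/p + (1/p) * r^2 := by ring

lemma coeff0 (p : ℝ) :
    coeff (kappaOneP p) 0 = (2:ℂ)⁻¹ ^ ((1:ℂ)/(p:ℂ)) * Complex.exp (1/(p:ℂ) - 1) := by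
  simp only [coeff, iteratedDeriv_zero, Nat.factorial_zero, Nat.cast_one, div_one, kappaOneP]
  rw [show ((1:ℂ)+0)^2/2 = (2:ℂ)⁻¹ by norm_num,
    show ((1:ℂ) - 1/(p:ℂ)) * (((0:ℂ)-1)/((0:ℂ)+1)) = 1/(p:ℂ) - 1 by
      rw [show ((0:ℂ)-1)/((0:ℂ)+1) = -1 by norm_num]; ring]

lemma kHasDerivAt (p : ℝ) :
    HasDerivAt (kappaOneP p)
      (2 * ((2:ℂ)⁻¹ ^ ((1:ℂ)/(p:ℂ)) * Complex.exp ((1:ℂ)/(p:ℂ) - 1))) 0 := by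
  set c : ℂ := (1:ℂ)/(p:ℂ) with hc
  have hslit : ((1+(0:ℂ))^2/2) ∈ Complex.slitPlane := kslit (by norm_num)
  have h1 : HasDerivAt (fun z : ℂ => (1+z)^2/2) 1 0 := by
    have h := (((hasDerivAt_id (0:ℂ)).const_add 1).pow 2).div_const 2
    exact h.congr_deriv (by norm_num)
  have h2 := h1.cpow_const (c := c) hslit
  have h3 : HasDerivAt (fun z : ℂ => (z-1)/(z+1)) 2 0 := by
    have h := ((hasDerivAt_id (0:ℂ)).sub_const 1).div
      ((hasDerivAt_id (0:ℂ)).add_const 1) (by norm_num)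
    exact h.congr_deriv (by norm_num)
  have h4 := (h3.const_mul ((1:ℂ) - c)).cexp
  have h5 := h2.mul h4
  have hfun : kappaOneP p
      = (fun z : ℂ => ((1+z)^2/2) ^ c * Complex.exp (((1:ℂ)-c) * ((z-1)/(z+1)))) := by
    funext z
    simp only [kappaOneP]
    try rw [hc]
  rw [hfun]
  refine h5.congr_deriv ?_
  rw [show ((1:ℂ)-c) * (((0:ℂ)-1)/((0:ℂ)+1)) = c - 1 by
      rw [show ((0:ℂ)-1)/((0:ℂ)+1) = -1 by norm_num]; ring,
    show ((1+(0:ℂ))^2/2) = (2:ℂ)⁻¹ by norm_num,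
    show ((2:ℂ)⁻¹) ^ (c - 1) = 2 * ((2:ℂ)⁻¹) ^ c by
      rw [Complex.cpow_sub _ _ (by norm_num : (2:ℂ)⁻¹ ≠ 0), Complex.cpow_one]
      field_simp
      try ring]
  ring

lemma coeff1 (p : ℝ) :
    coeff (kappaOneP p) 1 = 2 * ((2:ℂ)⁻¹ ^ ((1:ℂ)/(p:ℂ)) * Complex.exp ((1:ℂ)/(p:ℂ) - 1)) := by
  simp only [coeff, iteratedDeriv_one, Nat.factorial_one, Nat.cast_one, div_one]
  exact (kHasDerivAt p).deriv

lemma absval (p : ℝ) (hp : 2 ≤ p) :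
    ‖(2:ℂ)⁻¹ ^ ((1:ℂ)/(p:ℂ)) * Complex.exp (1/(p:ℂ) - 1)‖
      = (2:ℝ)⁻¹ ^ (1/p) * Real.exp (1/p - 1) := by
  have hp0 : (0:ℝ) < p := by linarith
  have hcast : ((1:ℂ)/(p:ℂ)) = ((1/p : ℝ) : ℂ) := by push_cast; ring
  rw [norm_mul]
  congr 1
  · rw [show ((2:ℂ))⁻¹ = Complex.ofReal ((2:ℝ)⁻¹) by norm_num, hcast,
      Complex.norm_cpow_eq_rpow_re_of_pos (by norm_num : (0:ℝ) < (2:ℝ)⁻¹)]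
    simp
  · rw [Complex.norm_exp]
    congr 1
    rw [show (1/(p:ℂ) - 1) = ((1/p - 1 : ℝ) : ℂ) by push_cast; ring]
    simp

lemma c0abs (p : ℝ) (hp : 2 ≤ p) :
    ‖coeff (kappaOneP p) 0‖ = (2:ℝ)⁻¹ ^ (1/p) * Real.exp (1/p - 1) := by
  rw [coeff0, absval p hp]

lemma c1abs (p : ℝ) (hp : 2 ≤ p) :
    ‖coeff (kappaOneP p) 1‖ = 2 * ((2:ℝ)⁻¹ ^ (1/p) * Real.exp (1/p - 1)) := by
  rw [coeff1, norm_mul, absval p hp, Complex.norm_two]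

lemma eq1 (p : ℝ) (hp : 2 ≤ p) :
    2 * ((2:ℝ)⁻¹ ^ (1/p) * Real.exp (1/p - 1)) = (2/Real.exp 1) ^ (1 - 1/p) := by
  have h2 : (0:ℝ) < 2 := two_pos
  have hrp : (0:ℝ) < (2:ℝ) ^ (1/p) := Real.rpow_pos_of_pos h2 _
  have hex : (0:ℝ) < Real.exp (1 - 1/p) := Real.exp_pos _
  rw [Real.div_rpow h2.le (Real.exp_pos 1).le, Real.exp_one_rpow,
    Real.rpow_sub h2, Real.rpow_one, Real.inv_rpow h2.le,
    show Real.exp (1/p - 1) = (Real.exp (1 - 1/p))⁻¹ by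
      rw [← Real.exp_neg]; congr 1; ring]
  field_simp

lemma asq (p : ℝ) (hp : 2 ≤ p) :
    (1:ℝ)/8 < ((2:ℝ)⁻¹ ^ (1/p) * Real.exp (1/p - 1))^2 := by
  have hp0 : (0:ℝ) < p := by linarith
  have hq0 : (0:ℝ) < 1/p := by positivity
  have hlog1 : Real.log 2 < 1 := by nlinarith [Real.log_two_lt_d9]
  have h1 : ((2:ℝ)⁻¹ ^ (1/p) * Real.exp (1/p - 1))^2
      = Real.exp ((2*(1/p)) * (1 - Real.log 2) - 2) := by
    rw [mul_pow,
      ← Real.rpow_natCast ((2:ℝ)⁻¹ ^ (1/p)) 2, ← Real.rpow_mul (by norm_num : (0:ℝ) ≤ 2⁻¹),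
      ← Real.exp_nat_mul,
      Real.rpow_def_of_pos (by norm_num : (0:ℝ) < 2⁻¹), Real.log_inv,
      ← Real.exp_add]
    congr 1
    push_cast
    ring
  rw [h1]
  have h2 : Real.exp (-2) ≤ Real.exp ((2*(1/p)) * (1 - Real.log 2) - 2) := by
    apply Real.exp_le_exp.mpr
    nlinarith [mul_pos hq0 (show (0:ℝ) < 1 - Real.log 2 by linarith)]
  have h3 : (1:ℝ)/8 < Real.exp (-2) := by
    have hE : Real.exp (-2) = (Real.exp 1 * Real.exp 1)⁻¹ := by
      rw [← Real.exp_add, ← Real.exp_neg]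
      norm_num
    have hE8 : Real.exp 1 * Real.exp 1 < 8 := by
      nlinarith [Real.exp_one_lt_d9, Real.exp_pos 1]
    have hEpos : (0:ℝ) < Real.exp 1 * Real.exp 1 := by positivity
    rw [hE, one_div]
    exact inv_strictAnti₀ hEpos hE8
  linarith

lemma tail_partial (p : ℝ) (hp : 2 ≤ p) (N : ℕ) :
    (∑ n ∈ Finset.range N, ‖coeff (kappaOneP p) (n+2)‖ ^ 2)
      ≤ 1 - 5 * ((2:ℝ)⁻¹ ^ (1/p) * Real.exp (1/p - 1))^2 := by
  set a : ℝ := (2:ℝ)⁻¹ ^ (1/p) * Real.exp (1/p - 1) with ha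
  have key : ∀ r : ℝ, r ∈ Set.Ioo (0:ℝ) 1 →
      (∑ n ∈ Finset.range N, ‖coeff (kappaOneP p) (n+2)‖ ^ 2 * r ^ (2*(n+2)))
        ≤ 1 - 1/p + (1/p)*r^2 - a^2 - (2*a)^2*r^2 := by
    intro r hr
    have hpb := partial_bound p hp hr.1 hr.2 (N+2)
    rw [Finset.sum_range_succ' _ (N+1), Finset.sum_range_succ' _ N] at hpb
    rw [c0abs p hp, c1abs p hp, ← ha] at hpb
    have e0 : r ^ (2*0) = 1 := by norm_num
    have e1 : r ^ (2*(0+1)) = r^2 := by norm_num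
    rw [e0, e1] at hpb
    have hterms : (∑ n ∈ Finset.range N,
        ‖coeff (kappaOneP p) (n+1+1)‖ ^ 2 * r ^ (2*(n+1+1)))
        = ∑ n ∈ Finset.range N,
          ‖coeff (kappaOneP p) (n+2)‖ ^ 2 * r ^ (2*(n+2)) := by
      apply Finset.sum_congr rfl
      intro n _
      norm_num
    rw [hterms] at hpb
    nlinarith [hpb]
  have h1 : Filter.Tendsto (fun r : ℝ => ∑ n ∈ Finset.range N,
      ‖coeff (kappaOneP p) (n+2)‖ ^ 2 * r ^ (2*(n+2)))
      (nhdsWithin 1 (Set.Iio 1))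
      (nhds (∑ n ∈ Finset.range N, ‖coeff (kappaOneP p) (n+2)‖ ^ 2)) := by
    have hc : Continuous (fun r : ℝ => ∑ n ∈ Finset.range N,
        ‖coeff (kappaOneP p) (n+2)‖ ^ 2 * r ^ (2*(n+2))) := by
      apply continuous_finset_sum
      intro n _
      fun_prop
    have ht := hc.tendsto 1
    simp only [one_pow, mul_one] at ht
    exact ht.mono_left nhdsWithin_le_nhds
  have h2 : Filter.Tendsto (fun r : ℝ => 1 - 1/p + (1/p)*r^2 - a^2 - (2*a)^2*r^2)
      (nhdsWithin 1 (Set.Iio 1))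
      (nhds (1 - 1/p + (1/p)*1^2 - a^2 - (2*a)^2*1^2)) := by
    have hc : Continuous (fun r : ℝ => 1 - 1/p + (1/p)*r^2 - a^2 - (2*a)^2*r^2) := by
      fun_prop
    exact (hc.tendsto 1).mono_left nhdsWithin_le_nhds
  have hev : ∀ᶠ r in nhdsWithin (1:ℝ) (Set.Iio 1),
      (∑ n ∈ Finset.range N, ‖coeff (kappaOneP p) (n+2)‖ ^ 2 * r ^ (2*(n+2)))
        ≤ 1 - 1/p + (1/p)*r^2 - a^2 - (2*a)^2*r^2 := by
    filter_upwards [Ioo_mem_nhdsLT_of_mem (show (1:ℝ) ∈ Set.Ioc 0 1 by norm_num)] with r hr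
    exact key r hr
  have hle := le_of_tendsto_of_tendsto h1 h2 hev
  nlinarith [hle]

end Stmt16Aux

/-- for `p ≥ 2`, the Taylor coefficients `cₙ⁰` of `κ_{1,p}` satisfy
`|c₁⁰| = (2/e)^{1-1/p}` and `Σ_{n≥2} |cₙ⁰|² < 1/2 < |c₁⁰|²`. -/
theorem stmt16 (p : ℝ) (hp : 2 ≤ p) :
    ‖coeff (kappaOneP p) 1‖ = (2 / Real.exp 1) ^ (1 - 1 / p) ∧
    Summable (fun n : ℕ => ‖coeff (kappaOneP p) (n + 2)‖ ^ 2) ∧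
    (∑' n : ℕ, ‖coeff (kappaOneP p) (n + 2)‖ ^ 2) < 1 / 2 ∧
    (1 / 2 : ℝ) < ‖coeff (kappaOneP p) 1‖ ^ 2 := by
  have hasq := Stmt16Aux.asq p hp
  have hsummable : Summable (fun n : ℕ => ‖coeff (kappaOneP p) (n + 2)‖ ^ 2) :=
    summable_of_sum_range_le (fun n => by positivity) (Stmt16Aux.tail_partial p hp)
  refine ⟨?_, hsummable, ?_, ?_⟩
  · rw [Stmt16Aux.c1abs p hp]
    exact Stmt16Aux.eq1 p hp
  · have htsum := hsummable.tsum_le_of_sum_range_le (Stmt16Aux.tail_partial p hp)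
    nlinarith [htsum]
  · rw [Stmt16Aux.c1abs p hp]
    nlinarith [hasq]
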